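/- arXiv:1510.06683 — 7 statements merged into one kernel-verified Lean document; each statement's English description precedes it below -/
import Mathlib

section
/- For every 2×2 complex unitary matrix U and every 2×2 density matrix ρ, the l1-coherence gain satisfies C_{l1}(UρU†) − C_{l1}(ρ) ≤ max( C_{l1}(U E₀₀ U†), C_{l1}(U E₁₁ U†) ), where E₀₀ and E₁₁ are the standard basis projectors. In other words, the coherence power of a qubit unitary with respect to the l1-coherence is achieved on pure incoherent states. -/
open Matrix
open scoped ComplexOrder
/-- The `l1`-coherence of a matrix: the sum of the absolute values of its
off-diagonal entries. -/
noncomputable def l1Coherence {n : ℕ} (A : Matrix (Fin n) (Fin n) ℂ) : ℝ :=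
  ∑ i, ∑ j, if i ≠ j then ‖A i j‖ else 0

lemma l1Coherence_fin_two (A : Matrix (Fin 2) (Fin 2) ℂ) :
    l1Coherence A = ‖A 0 1‖ + ‖A 1 0‖ := by
  simp [l1Coherence, Fin.sum_univ_two]

/-- For every 2×2 unitary `U` and every 2×2 density matrix `ρ`, the
`l1`-coherence gain of `U` on `ρ` is at most the maximum of the coherences of
the images of the two pure incoherent states. -/
theorem coherence_power_qubit_on_incoherent
    (U : Matrix (Fin 2) (Fin 2) ℂ) (hU : U ∈ Matrix.unitaryGroup (Fin 2) ℂ)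
    (ρ : Matrix (Fin 2) (Fin 2) ℂ) (hρ : ρ.PosSemidef) (htr : ρ.trace = 1) :
    l1Coherence (U * ρ * Uᴴ) - l1Coherence ρ ≤
      max (l1Coherence (U * Matrix.single 0 0 1 * Uᴴ))
          (l1Coherence (U * Matrix.single 1 1 1 * Uᴴ)) := by
  -- abbreviations for entries of U
  set a := U 0 0 with ha
  set b := U 0 1 with hb
  set c := U 1 0 with hc
  set d := U 1 1 with hd
  -- unitary facts
  have horth : a * star c + b * star d = 0 := by
    have := congrFun (congrFun hU.2 0) 1
    simpa [Matrix.mul_apply, Fin.sum_univ_two, Matrix.conjTranspose_apply,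
      Matrix.one_apply] using this
  have horth' : c * star a + d * star b = 0 := by
    have := congrFun (congrFun hU.2 1) 0
    simpa [Matrix.mul_apply, Fin.sum_univ_two, Matrix.conjTranspose_apply,
      Matrix.one_apply] using this
  have hrow0 : ‖a‖ ^ 2 + ‖b‖ ^ 2 = 1 := by
    have h2 := congrFun (congrFun hU.2 0) 0
    simp [Matrix.mul_apply, Fin.sum_univ_two, Matrix.conjTranspose_apply, Matrix.one_apply,
      Complex.mul_conj] at h2
    have := congrArg Complex.re h2
    simpa [Complex.sq_norm, Complex.normSq_apply, Complex.add_re] using this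
  have hrow1 : ‖c‖ ^ 2 + ‖d‖ ^ 2 = 1 := by
    have h2 := congrFun (congrFun hU.2 1) 1
    simp [Matrix.mul_apply, Fin.sum_univ_two, Matrix.conjTranspose_apply, Matrix.one_apply,
      Complex.mul_conj] at h2
    have := congrArg Complex.re h2
    simpa [Complex.sq_norm, Complex.normSq_apply, Complex.add_re] using this
  -- density matrix facts
  have h00 : (0:ℂ) ≤ ρ 0 0 := hρ.diag_nonneg
  have h11 : (0:ℂ) ≤ ρ 1 1 := hρ.diag_nonneg
  have h10 : ρ 1 0 = star (ρ 0 1) := by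
    have := congrFun (congrFun hρ.1 1) 0
    simpa [Matrix.conjTranspose_apply] using this.symm
  have htr2 : ρ 0 0 + ρ 1 1 = 1 := by
    simpa [Matrix.trace, Fin.sum_univ_two] using htr
  set r := (ρ 0 0).re with hrdef
  have hr : ρ 0 0 = (r : ℂ) := by
    rw [Complex.le_def] at h00
    exact Complex.ext rfl (by simpa using h00.2.symm)
  have h11' : ρ 1 1 = ((1 - r : ℝ) : ℂ) := by
    push_cast
    linear_combination htr2 - hr
  have hr0 : 0 ≤ r := by
    rw [Complex.le_def] at h00; simpa using h00.1
  have hr1 : r ≤ 1 := by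
    rw [Complex.le_def] at h11
    have := h11.1
    rw [h11'] at this
    simp at this
    linarith
  -- entries of the transformed matrix
  have hZ01 : (U * ρ * Uᴴ) 0 1 =
      ((2*r-1 : ℝ) : ℂ) * (a * star c) + ρ 0 1 * (a * star d)
        + star (ρ 0 1) * (b * star c) := by
    simp only [Matrix.mul_apply, Fin.sum_univ_two, Matrix.conjTranspose_apply]
    rw [h10, hr, h11']
    push_cast
    linear_combination (1 - (r:ℂ)) * horth
  have hZ10 : (U * ρ * Uᴴ) 1 0 =
      ((2*r-1 : ℝ) : ℂ) * (c * star a) + ρ 0 1 * (c * star b)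
        + star (ρ 0 1) * (d * star a) := by
    simp only [Matrix.mul_apply, Fin.sum_univ_two, Matrix.conjTranspose_apply]
    rw [h10, hr, h11']
    push_cast
    linear_combination (1 - (r:ℂ)) * horth'
  -- entries of the image of E00
  have hE01 : (U * Matrix.single (0 : Fin 2) (0 : Fin 2) (1:ℂ) * Uᴴ) 0 1
      = a * star c := by
    simp [Matrix.mul_apply, Fin.sum_univ_two, Matrix.conjTranspose_apply, Matrix.single,
      ha, hc]
  have hE10 : (U * Matrix.single (0 : Fin 2) (0 : Fin 2) (1:ℂ) * Uᴴ) 1 0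
      = c * star a := by
    simp [Matrix.mul_apply, Fin.sum_univ_two, Matrix.conjTranspose_apply, Matrix.single,
      ha, hc]
  -- notation for absolute values
  set A := ‖a‖
  set B := ‖b‖
  set C := ‖c‖
  set D := ‖d‖
  set R := ‖ρ 0 1‖
  have hA0 : 0 ≤ A := norm_nonneg _
  have hB0 : 0 ≤ B := norm_nonneg _
  have hC0 : 0 ≤ C := norm_nonneg _
  have hD0 : 0 ≤ D := norm_nonneg _
  have hR0 : 0 ≤ R := norm_nonneg _
  have habs2r : |2*r - 1| ≤ 1 := by rw [abs_le]; constructor <;> linarith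
  have hCS : A * D + B * C ≤ 1 := by
    nlinarith [sq_nonneg (A - D), sq_nonneg (B - C)]
  have hB01 : ‖(U * ρ * Uᴴ) 0 1‖ ≤ A * C + R := by
    rw [hZ01]
    calc ‖((2*r-1 : ℝ) : ℂ) * (a * star c) + ρ 0 1 * (a * star d)
          + star (ρ 0 1) * (b * star c)‖
        ≤ ‖((2*r-1 : ℝ) : ℂ) * (a * star c)‖ + ‖ρ 0 1 * (a * star d)‖
          + ‖star (ρ 0 1) * (b * star c)‖ := by
          exact (norm_add_le _ _).trans (by gcongr; exact norm_add_le _ _)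
      _ = |2*r-1| * (A * C) + R * (A * D) + R * (B * C) := by
          simp only [norm_mul, Complex.norm_real, Real.norm_eq_abs, Complex.star_def, Complex.norm_conj]
          rfl
      _ ≤ A * C + R := by
          have e1 : |2*r-1| * (A * C) ≤ A * C := by
            nlinarith [mul_nonneg hA0 hC0]
          have e2 : R * (A * D) + R * (B * C) ≤ R := by nlinarith
          linarith
  have hB10 : ‖(U * ρ * Uᴴ) 1 0‖ ≤ A * C + R := by
    rw [hZ10]
    calc ‖((2*r-1 : ℝ) : ℂ) * (c * star a) + ρ 0 1 * (c * star b)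
          + star (ρ 0 1) * (d * star a)‖
        ≤ ‖((2*r-1 : ℝ) : ℂ) * (c * star a)‖ + ‖ρ 0 1 * (c * star b)‖
          + ‖star (ρ 0 1) * (d * star a)‖ := by
          exact (norm_add_le _ _).trans (by gcongr; exact norm_add_le _ _)
      _ = |2*r-1| * (C * A) + R * (C * B) + R * (D * A) := by
          simp only [norm_mul, Complex.norm_real, Real.norm_eq_abs, Complex.star_def, Complex.norm_conj]
          rfl
      _ ≤ A * C + R := by
          have e1 : |2*r-1| * (C * A) ≤ A * C := by
            nlinarith [mul_nonneg hA0 hC0]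
          have e2 : R * (C * B) + R * (D * A) ≤ R := by nlinarith
          linarith
  refine le_trans ?_ (le_max_left _ _)
  rw [l1Coherence_fin_two, l1Coherence_fin_two, l1Coherence_fin_two, hE01, hE10, h10]
  have hst : ‖star (ρ 0 1)‖ = R := by
    simp [Complex.star_def, Complex.norm_conj]
    rfl
  have h1 : ‖a * star c‖ = A * C := by
    simp [norm_mul, Complex.star_def, Complex.norm_conj]
    rfl
  have h2 : ‖c * star a‖ = C * A := by
    simp [norm_mul, Complex.star_def, Complex.norm_conj]
    rfl
  rw [hst, h1, h2]
  linarith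
end

section
/- For every N×N complex unitary matrix U (N ≥ 1) and every basis index j, the l1-coherence of the image of the pure incoherent state E_{jj} is C_{l1}(U E_{jj} U†) = (∑_{i} |U_{ij}|)² − 1. -/
open Matrix
open scoped ComplexOrder

lemma entry_eq {N : ℕ} (U : Matrix (Fin N) (Fin N) ℂ) (j i k : Fin N) :
    (U * Matrix.single j j (1 : ℂ) * Uᴴ) i k
      = U i j * (starRingEnd ℂ) (U k j) := by
  simp [Matrix.mul_apply, Matrix.single, Matrix.conjTranspose_apply,
    ite_and, Finset.mul_sum, mul_ite]

/-- For an `N×N` unitary `U` and a basis index `j`, the `l1`-coherence of the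
image of the pure incoherent state `E_jj` is `(∑_i |U i j|)² − 1`. -/
theorem l1Coherence_unitary_on_pure_incoherent
    (N : ℕ) (hN : 1 ≤ N) (U : Matrix (Fin N) (Fin N) ℂ)
    (hU : U ∈ Matrix.unitaryGroup (Fin N) ℂ) (j : Fin N) :
    l1Coherence (U * Matrix.single j j 1 * Uᴴ) =
      (∑ i, ‖U i j‖) ^ 2 - 1 := by
  have h1 : (Uᴴ * U) j j = 1 := by
    have := hU.1
    rw [show (star U : Matrix (Fin N) (Fin N) ℂ) = Uᴴ from rfl] at this
    rw [this]; simp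
  have hcolC : ∑ i, ((Complex.normSq (U i j) : ℝ) : ℂ) = 1 := by
    have := h1
    simp only [Matrix.mul_apply, Matrix.conjTranspose_apply] at this
    rw [← this]
    exact Finset.sum_congr rfl fun i _ =>
      ((mul_comm _ _).trans (Complex.mul_conj (U i j))).symm
  have hcol : ∑ i, ‖U i j‖ ^ 2 = 1 := by
    have : ((∑ i, Complex.normSq (U i j) : ℝ) : ℂ) = ((1 : ℝ) : ℂ) := by
      push_cast; simpa using hcolC
    have h2 := Complex.ofReal_inj.mp this
    simpa [Complex.sq_norm] using h2
  have habs : ∀ i k : Fin N, ‖(U * Matrix.single j j (1 : ℂ) * Uᴴ) i k‖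
      = ‖U i j‖ * ‖U k j‖ := by
    intro i k
    rw [entry_eq U j i k]
    simp [norm_mul]
  have hfull : ∑ i, ∑ k, ‖U i j‖ * ‖U k j‖
      = (∑ i, ‖U i j‖) ^ 2 := by
    rw [sq, Finset.sum_mul_sum]
  calc l1Coherence (U * Matrix.single j j 1 * Uᴴ)
      = ∑ i, ∑ k, (if i ≠ k then ‖U i j‖ * ‖U k j‖ else 0) := by
        unfold l1Coherence
        exact Finset.sum_congr rfl fun i _ => Finset.sum_congr rfl fun k _ => by rw [habs]
    _ = (∑ i, ∑ k, ‖U i j‖ * ‖U k j‖)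
        - ∑ i, ‖U i j‖ ^ 2 := by
        rw [← Finset.sum_sub_distrib]
        refine Finset.sum_congr rfl fun i _ => ?_
        have : ∀ k : Fin N, (if i ≠ k then ‖U i j‖ * ‖U k j‖ else 0)
            = ‖U i j‖ * ‖U k j‖
              - (if i = k then ‖U i j‖ * ‖U k j‖ else 0) := by
          intro k; by_cases h : i = k <;> simp [h]
        rw [Finset.sum_congr rfl fun k _ => this k, Finset.sum_sub_distrib,
          Finset.sum_ite_eq]
        simp [sq]
    _ = (∑ i, ‖U i j‖) ^ 2 - 1 := by rw [hfull, hcol]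
end

section
/- Let N ≥ 1 and let F be the N×N discrete Fourier transform matrix with entries F_{jk} = e^{2πi jk/N}/√N. Then the coherence power of F with respect to the l1-coherence is maximal and equals N − 1: for every N×N density matrix ρ one has C_{l1}(FρF†) − C_{l1}(ρ) ≤ N − 1, and the value N − 1 is attained on a pure incoherent state E_{kk}. -/
open Matrix
open scoped ComplexOrder

section Helpers

lemma fourier_conjT_mul_self (N : ℕ) (hN : 1 ≤ N) (F : Matrix (Fin N) (Fin N) ℂ)
    (hF : ∀ j k : Fin N, F j k =
      Complex.exp (2 * Real.pi * Complex.I * (j : ℕ) * (k : ℕ) / N) / Real.sqrt N) :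
    Fᴴ * F = 1 := by
  have hN0 : (N : ℂ) ≠ 0 := Nat.cast_ne_zero.mpr (by omega)
  have hNR : (0:ℝ) ≤ N := Nat.cast_nonneg N
  ext a b
  set w : ℂ := Complex.exp (2 * Real.pi * Complex.I * (((b:ℕ):ℤ) - ((a:ℕ):ℤ)) / N) with hw
  have hterm : ∀ i : Fin N, (Fᴴ) a i * F i b = w ^ (i : ℕ) / N := by
    intro i
    rw [Matrix.conjTranspose_apply, hF, hF]
    rw [← Complex.exp_nat_mul]
    have h1 : star (Complex.exp (2 * Real.pi * Complex.I * (i : ℕ) * (a : ℕ) / N) / (Real.sqrt N : ℝ))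
        = Complex.exp (-(2 * Real.pi * Complex.I * (i : ℕ) * (a : ℕ) / N)) / (Real.sqrt N : ℝ) := by
      have harg : (starRingEnd ℂ) (2 * (Real.pi:ℂ) * Complex.I * (i:ℕ) * (a:ℕ) / N)
          = -(2 * (Real.pi:ℂ) * Complex.I * (i:ℕ) * (a:ℕ) / N) := by
        simp only [map_div₀, _root_.map_mul, Complex.conj_I, Complex.conj_ofReal, map_ofNat,
          Complex.conj_natCast]
        ring
      rw [star_div₀, Complex.star_def, ← Complex.exp_conj, harg, Complex.conj_ofReal]
    rw [h1, div_mul_div_comm, ← Complex.exp_add]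
    have h2 : ((Real.sqrt N : ℂ)) * (Real.sqrt N : ℂ) = (N : ℂ) := by
      rw [← Complex.ofReal_mul, Real.mul_self_sqrt hNR]
      simp
    rw [h2]
    congr 1
    push_cast
    ring
  rw [Matrix.mul_apply]
  simp only [hterm]
  rw [← Finset.sum_div, Fin.sum_univ_eq_sum_range (fun i => w ^ i)]
  by_cases hab : a = b
  · subst hab
    have : w = 1 := by rw [hw]; norm_num
    simp [this, Matrix.one_apply]
    omega
  · have hwN : w ^ N = 1 := by
      rw [hw, ← Complex.exp_nat_mul]
      have : (N : ℂ) * (2 * Real.pi * Complex.I * (((b:ℕ):ℤ) - ((a:ℕ):ℤ)) / N)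
          = ((((b:ℕ):ℤ) - ((a:ℕ):ℤ) : ℤ) : ℂ) * (2 * Real.pi * Complex.I) := by
        push_cast
        field_simp
      rw [this, Complex.exp_int_mul_two_pi_mul_I]
    have hw1 : w ≠ 1 := by
      intro h1
      rw [hw, Complex.exp_eq_one_iff] at h1
      obtain ⟨n, hn⟩ := h1
      have h2pi : (2 * (Real.pi : ℂ) * Complex.I) ≠ 0 := by
        simp [Real.pi_ne_zero, Complex.I_ne_zero]
      have key : (2 * (Real.pi:ℂ) * Complex.I) * ((((b:ℕ):ℂ) - ((a:ℕ):ℂ)))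
          = (2 * (Real.pi:ℂ) * Complex.I) * ((n:ℂ) * N) := by
        field_simp at hn
        push_cast at hn
        linear_combination (2 * (Real.pi:ℂ) * Complex.I) * hn
      have h3C := mul_left_cancel₀ h2pi key
      have h3 : (((b:ℕ):ℤ) - ((a:ℕ):ℤ)) = n * N := by exact_mod_cast h3C
      have hb := b.isLt; have ha := a.isLt
      have hab' : ((b:ℕ):ℤ) ≠ ((a:ℕ):ℤ) := by
        simp only [Ne, Int.natCast_inj]
        exact fun h => hab (Fin.ext h.symm)
      rcases lt_trichotomy n 0 with h | h | h
      · nlinarith [h3, Int.le_of_lt h, (by exact_mod_cast hb : ((b:ℕ):ℤ) < N),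
          (by positivity : (0:ℤ) ≤ ((a:ℕ):ℤ))]
      · simp [h] at h3; omega
      · nlinarith [h3, (by exact_mod_cast ha : ((a:ℕ):ℤ) < N),
          (by positivity : (0:ℤ) ≤ ((b:ℕ):ℤ))]
    rw [geom_sum_eq hw1, hwN]
    simp [Matrix.one_apply, hab]

lemma psd_diag_nonneg {N : ℕ} {σ : Matrix (Fin N) (Fin N) ℂ} (h : σ.PosSemidef) (k : Fin N) :
    0 ≤ σ k k := by
  simpa [Matrix.mulVec_single, dotProduct, Pi.single_apply] using (Matrix.posSemidef_iff_dotProduct_mulVec.mp h).2 (Pi.single k 1)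

lemma psd_entry_bound {N : ℕ} {σ : Matrix (Fin N) (Fin N) ℂ} (h : σ.PosSemidef) (i j : Fin N) :
    ‖σ i j‖ ≤ ((σ i i).re + (σ j j).re) / 2 := by
  have hii := psd_diag_nonneg h i
  have hjj := psd_diag_nonneg h j
  have hiiR : 0 ≤ (σ i i).re := by
    rw [Complex.le_def] at hii; exact hii.1
  have hjjR : 0 ≤ (σ j j).re := by
    rw [Complex.le_def] at hjj; exact hjj.1
  by_cases hij0 : σ i j = 0
  · rw [hij0]; simp; linarith
  by_cases hij : i = j
  · subst hij
    have him : (σ i i).im = 0 := by rw [Complex.le_def] at hii; simpa using hii.2.symm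
    rw [show ((σ i i).re + (σ i i).re)/2 = (σ i i).re by ring]
    rw [Complex.norm_def, Complex.normSq_apply, him]
    simp
    rw [show (σ i i).re * (σ i i).re = (σ i i).re ^ 2 by ring, Real.sqrt_sq hiiR]
  · set c : ℂ := -σ i j / ((‖σ i j‖ : ℝ) : ℂ) with hc
    have habs : (‖σ i j‖ : ℝ) ≠ 0 := by
      simpa using hij0
    have hcc : (starRingEnd ℂ) c * c = 1 := by
      rw [hc]
      rw [map_div₀, map_neg]
      rw [Complex.conj_ofReal]
      rw [div_mul_div_comm, neg_mul_neg, mul_comm ((starRingEnd ℂ) (σ i j)), Complex.mul_conj,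
        ← Complex.ofReal_mul, ← sq, ← Complex.normSq_eq_norm_sq]
      rw [div_self]
      simpa [Complex.normSq_eq_zero] using hij0
    have key := (Matrix.posSemidef_iff_dotProduct_mulVec.mp h).2 (c • (Pi.single i 1 : Fin N → ℂ) + (Pi.single j 1 : Fin N → ℂ))
    simp only [star_add, star_smul, Matrix.mulVec_add, Matrix.mulVec_smul,
      Matrix.mulVec_single, mul_one, add_dotProduct, smul_dotProduct,
      dotProduct_add, smul_eq_mul, ← Pi.single_star, star_one,
      single_dotProduct, dotProduct_smul, one_mul, Matrix.col_apply, Matrix.transpose_apply,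
      MulOpposite.op_one, one_smul] at key
    have hji : σ j i = (starRingEnd ℂ) (σ i j) := by
      have := congrFun (congrFun h.1 j) i
      simpa [Matrix.conjTranspose_apply] using this.symm
    have hcastne : ((‖σ i j‖ : ℝ) : ℂ) ≠ 0 := by exact_mod_cast habs
    have hc1 : (starRingEnd ℂ) c * σ i j = -((‖σ i j‖ : ℝ) : ℂ) := by
      rw [hc, map_div₀, map_neg, Complex.conj_ofReal, div_mul_eq_mul_div, neg_mul,
        mul_comm ((starRingEnd ℂ) (σ i j)), Complex.mul_conj, Complex.normSq_eq_norm_sq]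
      push_cast
      field_simp
    have hc2 : c * σ j i = -((‖σ i j‖ : ℝ) : ℂ) := by
      have : c * σ j i = (starRingEnd ℂ) ((starRingEnd ℂ) c * σ i j) := by
        rw [hji, _root_.map_mul, Complex.conj_conj]
      rw [this, hc1, map_neg, Complex.conj_ofReal]
    have hccc : c * (starRingEnd ℂ) c = 1 := by rw [mul_comm]; exact hcc
    have hq : c * (star c * σ i i + σ j i) + (star c * σ i j + σ j j)
        = σ i i + σ j j - 2 * ((‖σ i j‖ : ℝ) : ℂ) := by
      rw [Complex.star_def]
      linear_combination (σ i i) * hccc + hc1 + hc2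
    rw [hq, Complex.le_def] at key
    have := key.1
    simp only [Complex.sub_re, Complex.add_re, Complex.zero_re, Complex.mul_re,
      Complex.ofReal_re, Complex.ofReal_im, Complex.re_ofNat, Complex.im_ofNat] at this
    linarith

lemma sum_offdiag {N : ℕ} (f : Fin N → Fin N → ℝ) :
    ∑ i, ∑ j, (if i ≠ j then f i j else 0) = (∑ i, ∑ j, f i j) - ∑ i, f i i := by
  rw [← Finset.sum_sub_distrib]
  refine Finset.sum_congr rfl fun i _ => ?_
  rw [show ∑ j, (if i ≠ j then f i j else 0) = ∑ j, (f i j - if i = j then f i j else 0) by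
    refine Finset.sum_congr rfl fun j _ => ?_
    by_cases hij : i = j <;> simp [hij]]
  rw [Finset.sum_sub_distrib, Finset.sum_ite_eq]
  simp

lemma offdiag_halfsum {N : ℕ} (d : Fin N → ℝ) (hd : ∑ i, d i = 1) :
    ∑ i, ∑ j, (if i ≠ j then (d i + d j) / 2 else 0) = (N : ℝ) - 1 := by
  rw [sum_offdiag]
  have h1 : ∀ i : Fin N, ∑ j, (d i + d j) / 2 = ((N : ℝ) * d i + 1) / 2 := by
    intro i
    rw [← Finset.sum_div, Finset.sum_add_distrib, hd, Finset.sum_const]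
    simp [Finset.card_univ, nsmul_eq_mul, mul_comm]
  rw [Finset.sum_congr rfl fun i _ => h1 i]
  have h2 : ∑ i : Fin N, ((N : ℝ) * d i + 1) / 2 = ((N : ℝ) + N) / 2 := by
    rw [← Finset.sum_div, Finset.sum_add_distrib, ← Finset.mul_sum, hd, Finset.sum_const]
    simp [Finset.card_univ]
  rw [h2, show ∑ i : Fin N, (d i + d i) / 2 = ∑ i, d i from
    Finset.sum_congr rfl fun i _ => by ring, hd]
  ring

end Helpers

/-- The coherence power of the `N`-dimensional discrete Fourier transform with
respect to the `l1`-coherence is maximal and equals `N − 1`: the coherence gain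
on any density matrix is at most `N − 1`, and this value is attained on a pure
incoherent state. -/
theorem coherence_power_fourier
    (N : ℕ) (hN : 1 ≤ N) (F : Matrix (Fin N) (Fin N) ℂ)
    (hF : ∀ j k : Fin N, F j k =
      Complex.exp (2 * Real.pi * Complex.I * (j : ℕ) * (k : ℕ) / N) / Real.sqrt N) :
    (∀ ρ : Matrix (Fin N) (Fin N) ℂ, ρ.PosSemidef → ρ.trace = 1 →
      l1Coherence (F * ρ * Fᴴ) - l1Coherence ρ ≤ (N : ℝ) - 1) ∧
    (∃ k : Fin N,
      l1Coherence (F * Matrix.single k k 1 * Fᴴ) -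
          l1Coherence (Matrix.single k k 1) = (N : ℝ) - 1) := by
  have hN0 : (0:ℝ) < N := by exact_mod_cast hN
  have hFu : Fᴴ * F = 1 := fourier_conjT_mul_self N hN F hF
  constructor
  · intro ρ hρ hρtr
    set σ := F * ρ * Fᴴ with hσdef
    have hσ : σ.PosSemidef := hρ.mul_mul_conjTranspose_same F
    have hσtr : σ.trace = 1 := by
      rw [hσdef, Matrix.trace_mul_cycle, hFu, Matrix.one_mul, hρtr]
    have hdsum : ∑ i, (σ i i).re = 1 := by
      have : (σ.trace).re = (1:ℂ).re := by rw [hσtr]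
      simpa [Matrix.trace, Matrix.diag, Complex.re_sum] using this
    have hl1ρ : 0 ≤ l1Coherence ρ := by
      refine Finset.sum_nonneg fun i _ => Finset.sum_nonneg fun j _ => ?_
      positivity
    have hbound : l1Coherence σ ≤ (N : ℝ) - 1 := by
      calc l1Coherence σ
          ≤ ∑ i, ∑ j, (if i ≠ j then ((σ i i).re + (σ j j).re) / 2 else 0) := by
            refine Finset.sum_le_sum fun i _ => Finset.sum_le_sum fun j _ => ?_
            by_cases hij : i = j
            · simp [hij]
            · simp only [hij, Ne, not_false_iff, if_true]
              exact psd_entry_bound hσ i j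
        _ = (N : ℝ) - 1 := offdiag_halfsum _ hdsum
    linarith
  · refine ⟨⟨0, by omega⟩, ?_⟩
    set k : Fin N := ⟨0, by omega⟩
    have hE0 : l1Coherence (Matrix.single k k 1) = 0 := by
      refine Finset.sum_eq_zero fun i _ => Finset.sum_eq_zero fun j _ => ?_
      by_cases hij : i = j
      · simp [hij]
      · have : Matrix.single k k (1:ℂ) i j = 0 := by
          apply Matrix.single_apply_of_ne
          intro hc
          exact hij (hc.1.symm ▸ hc.2.symm ▸ rfl)
        simp [hij, this]
    have habsF : ∀ i : Fin N, ‖F i k‖ = 1 / Real.sqrt N := by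
      intro i
      rw [hF, norm_div, Complex.norm_real, Real.norm_eq_abs]
      have harg : (2*(Real.pi:ℂ)*Complex.I*((i:ℕ):ℂ)*((k:ℕ):ℂ)/N)
          = ((2*Real.pi*(i:ℕ)*(k:ℕ)/N : ℝ):ℂ) * Complex.I := by push_cast; ring
      rw [harg, Complex.norm_exp_ofReal_mul_I, abs_of_nonneg (Real.sqrt_nonneg _)]
    have hA : ∀ i j : Fin N, ((F * Matrix.single k k 1 * Fᴴ : Matrix (Fin N) (Fin N) ℂ)) i j
        = F i k * star (F j k) := by
      intro i j
      rw [Matrix.mul_apply, Finset.sum_eq_single k]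
      · rw [Matrix.mul_single_apply_same (i := k) (j := k) (a := i), Matrix.conjTranspose_apply, mul_one]
      · intro b _ hb
        rw [Matrix.mul_single_apply_of_ne (i := k) (j := k) (a := i) (b := b) (hbj := hb), zero_mul]
      · simp
    have habsA : ∀ i j : Fin N, ‖(((F * Matrix.single k k 1 * Fᴴ : Matrix (Fin N) (Fin N) ℂ)) i j)‖
        = 1 / N := by
      intro i j
      rw [hA, norm_mul, habsF, Complex.star_def, Complex.norm_conj, habsF]
      rw [div_mul_div_comm, one_mul, Real.mul_self_sqrt hN0.le]
    have : l1Coherence (F * Matrix.single k k 1 * Fᴴ) = (N:ℝ) - 1 := by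
      unfold l1Coherence
      rw [show (∑ i, ∑ j, if i ≠ j then
          ‖(((F * Matrix.single k k 1 * Fᴴ : Matrix (Fin N) (Fin N) ℂ)) i j)‖ else 0)
          = ∑ i : Fin N, ∑ j : Fin N, (if i ≠ j then (1:ℝ)/N else 0) from
        Finset.sum_congr rfl fun i _ => Finset.sum_congr rfl fun j _ => by
          by_cases hij : i = j <;> simp [hij, habsA]]
      rw [sum_offdiag]
      simp [Finset.sum_const, Finset.card_univ]
      field_simp
    rw [this, hE0, sub_zero]
end

section
/- For every N×N density matrix ρ (N ≥ 1), the l1-coherence satisfies C_{l1}(ρ) = ∑_{i≠j} |ρ_{ij}| ≤ N − 1. -/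
open Matrix
open scoped ComplexOrder

lemma key_abs_le {N : ℕ} {ρ : Matrix (Fin N) (Fin N) ℂ} (hρ : ρ.PosSemidef)
    (i j : Fin N) (hij : i ≠ j) :
    2 * ‖ρ i j‖ ≤ (ρ i i).re + (ρ j j).re := by
  set a : ℂ := ρ i j with ha
  set c : ℂ := if a = 0 then 1 else (starRingEnd ℂ a) / ‖a‖ with hc
  have habs : (‖a‖ : ℝ) ≥ 0 := norm_nonneg a
  have hca : a * c = (‖a‖ : ℂ) := by
    by_cases h : a = 0
    · simp [hc, h]
    · have hne : (‖a‖ : ℂ) ≠ 0 := by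
        simpa using norm_ne_zero_iff.mpr h
      rw [hc, if_neg h]
      field_simp
      rw [Complex.mul_conj, Complex.normSq_eq_norm_sq]
      push_cast
      ring
  have hcc : (starRingEnd ℂ c) * c = 1 := by
    rw [mul_comm, Complex.mul_conj]
    by_cases h : a = 0
    · simp [hc, h]
    · have hne : (‖a‖ : ℝ) ≠ 0 := norm_ne_zero_iff.mpr h
      rw [hc, if_neg h]
      rw [Complex.normSq_div, Complex.normSq_conj, Complex.normSq_eq_norm_sq,
        Complex.normSq_ofReal]
      norm_cast
      field_simp
  have hji : ρ j i = starRingEnd ℂ a := by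
    rw [ha, ← hρ.isHermitian.apply i j, starRingEnd_apply, star_star]
  have hcji : (starRingEnd ℂ c) * ρ j i = (‖a‖ : ℂ) := by
    rw [hji, ← _root_.map_mul, mul_comm, hca, Complex.conj_ofReal]
  -- the test vector
  set x : Fin N → ℂ := (Pi.single i 1 : Fin N → ℂ) - c • (Pi.single j 1 : Fin N → ℂ) with hx
  have h0 := hρ.dotProduct_mulVec_nonneg x
  have hmv : ρ *ᵥ x = (fun k => ρ k i) - c • (fun k => ρ k j) := by
    rw [hx, mulVec_sub, mulVec_smul, mulVec_single, mulVec_single]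
    simp
    rfl
  have hstar : star x = (Pi.single i 1 : Fin N → ℂ) - (starRingEnd ℂ c) • (Pi.single j 1 : Fin N → ℂ) := by
    ext k
    simp only [hx, Pi.star_apply, Pi.sub_apply, Pi.smul_apply, smul_eq_mul,
      star_sub, star_mul', Pi.single_apply, starRingEnd_apply]
    by_cases h : k = i <;> by_cases h' : k = j <;>
      simp [h, h', apply_ite (star : ℂ → ℂ)]
  have hval : star x ⬝ᵥ ρ *ᵥ x = ρ i i + ρ j j - 2 * (‖a‖ : ℂ) := by
    rw [hmv, hstar]
    rw [sub_dotProduct, smul_dotProduct, dotProduct_sub, dotProduct_sub,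
      dotProduct_smul, dotProduct_smul]
    rw [single_dotProduct, single_dotProduct]
    simp only [one_mul, smul_eq_mul]
    have e2 : (Pi.single j 1 : Fin N → ℂ) ⬝ᵥ (fun k => ρ k i) = ρ j i :=
      by rw [single_dotProduct, one_mul]
    have e3 : (Pi.single j 1 : Fin N → ℂ) ⬝ᵥ (fun k => ρ k j) = ρ j j :=
      by rw [single_dotProduct, one_mul]
    rw [e2, e3, ← ha]
    linear_combination (-1 : ℂ) * hca - hcji + ρ j j * hcc
  rw [hval] at h0
  have hre := h0.1
  simp only [Complex.zero_re, Complex.sub_re, Complex.add_re, Complex.mul_re,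
    Complex.ofReal_re, Complex.ofReal_im] at hre
  norm_num at hre
  linarith

/-- For every `N×N` density matrix `ρ`, the `l1`-coherence is at most `N − 1`. -/
theorem l1Coherence_le_dim_sub_one
    (N : ℕ) (hN : 1 ≤ N) (ρ : Matrix (Fin N) (Fin N) ℂ)
    (hρ : ρ.PosSemidef) (htr : ρ.trace = 1) :
    l1Coherence ρ ≤ (N : ℝ) - 1 := by
  set d : Fin N → ℝ := fun i => (ρ i i).re with hd
  have hsum : ∑ i, d i = 1 := by
    have := congrArg Complex.re htr
    simpa [Matrix.trace, Matrix.diag, Complex.re_sum, hd] using this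
  have hbound : l1Coherence ρ ≤ ∑ i, ∑ j, (if i ≠ j then (d i + d j) / 2 else 0) := by
    unfold l1Coherence
    refine Finset.sum_le_sum fun i _ => Finset.sum_le_sum fun j _ => ?_
    by_cases h : i = j
    · simp [h]
    · simp only [if_neg, h, ne_eq, not_false_eq_true, if_true]
      have := key_abs_le hρ i j h
      linarith
  have hcalc : ∀ i : Fin N, ∑ j, (if i ≠ j then (d i + d j) / 2 else 0)
      = (∑ j, (d i + d j) / 2) - (d i + d i) / 2 := by
    intro i
    have : ∀ j : Fin N, (if i ≠ j then (d i + d j) / 2 else 0)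
        = (d i + d j) / 2 - (if j = i then (d i + d j) / 2 else 0) := by
      intro j
      by_cases h : j = i
      · simp [h]
      · rw [if_pos (fun he => h he.symm), if_neg h, sub_zero]
    simp only [this, Finset.sum_sub_distrib, Finset.sum_ite_eq' Finset.univ i]
    simp
  have hfin : ∑ i, ∑ j, (if i ≠ j then (d i + d j) / 2 else 0) = (N : ℝ) - 1 := by
    simp only [hcalc]
    have : ∀ i : Fin N, ∑ j : Fin N, (d i + d j) / 2 = ((N : ℝ) * d i + 1) / 2 := by
      intro i
      rw [← Finset.sum_div]
      rw [Finset.sum_add_distrib, hsum, Finset.sum_const, Finset.card_univ,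
        Fintype.card_fin, nsmul_eq_mul]
    simp only [this]
    rw [Finset.sum_sub_distrib, ← Finset.sum_div, ← Finset.sum_div,
      Finset.sum_add_distrib, Finset.sum_add_distrib, ← Finset.mul_sum, hsum,
      Finset.sum_const, Finset.card_univ, Fintype.card_fin, nsmul_eq_mul, mul_one]
    ring
  linarith
end

section
/- Let U be an N×N complex unitary matrix (N ≥ 1) and let ρ be an N×N density matrix that is incoherent, i.e. diagonal. Then C_{l1}(UρU†) ≤ max_{i} C_{l1}(U E_{ii} U†), where the maximum is over the pure incoherent states E_{ii}. In particular, over incoherent states the l1-coherence gain of U is maximized by a pure incoherent state. -/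
open Matrix
open scoped ComplexOrder

/-- For a unitary `U` and an incoherent (diagonal) density matrix `ρ`, the
`l1`-coherence of `U * ρ * Uᴴ` is at most the maximum over `i` of the
`l1`-coherence of the image of the pure incoherent state `E_ii`. -/
theorem l1Coherence_incoherent_le_max_pure
    (N : ℕ) (hN : 1 ≤ N) (U : Matrix (Fin N) (Fin N) ℂ)
    (hU : U ∈ Matrix.unitaryGroup (Fin N) ℂ)
    (ρ : Matrix (Fin N) (Fin N) ℂ) (hρ : ρ.PosSemidef) (htr : ρ.trace = 1)
    (hdiag : ∀ i j : Fin N, i ≠ j → ρ i j = 0) :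
    l1Coherence (U * ρ * Uᴴ) ≤
      Finset.univ.sup' ⟨⟨0, hN⟩, Finset.mem_univ _⟩
        (fun i : Fin N => l1Coherence (U * Matrix.single i i 1 * Uᴴ)) := by
  set p : Fin N → ℝ := fun i => (ρ i i).re with hp
  have hre : ∀ i, ρ i i = (p i : ℂ) := fun i => (hρ.1.coe_re_apply_self i).symm
  have hnn : ∀ i, 0 ≤ p i := by
    intro i
    have h0 : (0 : ℂ) ≤ ρ i i := by
      have := hρ.2 (Finsupp.single i 1)
      simpa [dotProduct, mulVec, Pi.single_apply] using this
    exact (Complex.le_def.mp h0).1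
  have hsum : ∑ i, p i = 1 := by
    have : (↑(∑ i, p i) : ℂ) = 1 := by
      rw [Complex.ofReal_sum]
      simp_rw [← hre]
      simpa [Matrix.trace] using htr
    exact_mod_cast this
  have hρd : ρ = Matrix.diagonal (fun i => ρ i i) := by
    ext i j
    by_cases h : i = j
    · subst h; simp
    · simp [Matrix.diagonal, h, hdiag i j h]
  have hE : ∀ (i a b : Fin N), (U * Matrix.single i i 1 * Uᴴ : Matrix (Fin N) (Fin N) ℂ) a b
      = U a i * (starRingEnd ℂ) (U b i) := by
    intro i a b
    simp [Matrix.mul_apply, Matrix.single_apply, conjTranspose_apply, ite_and,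
      Finset.sum_ite_eq, mul_comm]
  have hdecomp : ∀ (a b : Fin N), (U * ρ * Uᴴ) a b
      = ∑ i, (p i : ℂ) * (U a i * (starRingEnd ℂ) (U b i)) := by
    intro a b
    rw [hρd]
    simp [Matrix.mul_apply, Matrix.diagonal, conjTranspose_apply, Finset.sum_ite_eq,
      mul_comm, mul_left_comm, ← hre]
    exact Finset.sum_congr rfl fun x _ => mul_assoc _ _ _
  set S := Finset.univ.sup' (⟨⟨0, hN⟩, Finset.mem_univ _⟩ : Finset.univ.Nonempty)
    (fun i : Fin N => l1Coherence (U * Matrix.single i i 1 * Uᴴ)) with hSdef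
  calc l1Coherence (U * ρ * Uᴴ)
      ≤ ∑ i, p i * l1Coherence (U * Matrix.single i i 1 * Uᴴ) := by
        have key : ∀ a b : Fin N, (if a ≠ b then ‖(U * ρ * Uᴴ) a b‖ else 0)
            ≤ ∑ i, p i *
              (if a ≠ b then ‖(U * Matrix.single i i 1 * Uᴴ : Matrix (Fin N) (Fin N) ℂ) a b‖ else 0) := by
          intro a b
          by_cases h : a = b
          · simp [h, Finset.sum_const_zero]
          · simp only [h, ne_eq, not_false_iff, if_true]
            rw [hdecomp]
            refine le_trans (norm_sum_le _ _) (le_of_eq ?_)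
            refine Finset.sum_congr rfl fun i _ => ?_
            rw [hE, norm_mul, Complex.norm_real, Real.norm_eq_abs, abs_of_nonneg (hnn i)]
        unfold l1Coherence
        calc (∑ a, ∑ b, if a ≠ b then ‖(U * ρ * Uᴴ) a b‖ else 0)
            ≤ ∑ a, ∑ b, ∑ i, p i *
                (if a ≠ b then ‖(U * Matrix.single i i 1 * Uᴴ : Matrix (Fin N) (Fin N) ℂ) a b‖ else 0) :=
              Finset.sum_le_sum fun a _ => Finset.sum_le_sum fun b _ => key a b
          _ = ∑ a, ∑ i, ∑ b, p i *
                (if a ≠ b then ‖(U * Matrix.single i i 1 * Uᴴ : Matrix (Fin N) (Fin N) ℂ) a b‖ else 0) :=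
              Finset.sum_congr rfl fun a _ => Finset.sum_comm
          _ = ∑ i, ∑ a, ∑ b, p i *
                (if a ≠ b then ‖(U * Matrix.single i i 1 * Uᴴ : Matrix (Fin N) (Fin N) ℂ) a b‖ else 0) :=
              Finset.sum_comm
          _ = ∑ i, p i * ∑ a, ∑ b,
                (if a ≠ b then ‖(U * Matrix.single i i 1 * Uᴴ : Matrix (Fin N) (Fin N) ℂ) a b‖ else 0) := by
              simp_rw [Finset.mul_sum]
    _ ≤ ∑ i, p i * S := by
        refine Finset.sum_le_sum fun i _ => ?_
        refine mul_le_mul_of_nonneg_left ?_ (hnn i)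
        rw [hSdef]
        exact Finset.le_sup' (fun i : Fin N => l1Coherence (U * Matrix.single i i 1 * Uᴴ)) (Finset.mem_univ i)
    _ = S := by rw [← Finset.sum_mul, hsum, one_mul]
end

section
/- Let U be the 3×3 real unitary matrix R_x(π/4) with rows (1,0,0), (0, 1/√2, −1/√2), (0, 1/√2, 1/√2). Then: (a) for every diagonal (incoherent) 3×3 density matrix ρ, the l1-coherence gain satisfies C_{l1}(UρU†) − C_{l1}(ρ) ≤ 1; (b) for the pure state ψ = c₁e₁ + c₃e₃ with c₁ = 3/10 and c₃ = √91/10 (so ρ_ψ = |ψ⟩⟨ψ| is a density matrix with C_{l1}(ρ_ψ) > 0), the gain equals C_{l1}(Uρ_ψU†) − C_{l1}(ρ_ψ) = (2√2 − 2)c₁c₃ + c₃², and this value is strictly greater than 1. Hence the coherence power of U is not attained on incoherent states. -/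
open Matrix
open scoped ComplexOrder

lemma l1_three (A : Matrix (Fin 3) (Fin 3) ℂ) :
    l1Coherence A = ‖A 0 1‖ + ‖A 0 2‖ + ‖A 1 0‖
      + ‖A 1 2‖ + ‖A 2 0‖ + ‖A 2 1‖ := by
  simp [l1Coherence, Fin.sum_univ_three]; ring

set_option maxHeartbeats 1600000 in
/-- For the rotation `R_x(π/4)`, the `l1`-coherence gain on every incoherent
(diagonal) density matrix is at most `1`, while the coherent pure state
`ψ = c₁ e₁ + c₃ e₃` with `c₁ = 3/10`, `c₃ = √91/10` achieves the strictly
larger gain `(2√2 − 2)c₁c₃ + c₃² > 1`. Hence the coherence power of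
`R_x(π/4)` is not attained on incoherent states. -/
theorem rotation_pi_div_four_coherent_gain
    (U : Matrix (Fin 3) (Fin 3) ℂ)
    (hU : U = !![1, 0, 0;
                 0, ((Real.sqrt 2 : ℝ) : ℂ)⁻¹, -((Real.sqrt 2 : ℝ) : ℂ)⁻¹;
                 0, ((Real.sqrt 2 : ℝ) : ℂ)⁻¹, ((Real.sqrt 2 : ℝ) : ℂ)⁻¹])
    (c₁ c₃ : ℝ) (hc₁ : c₁ = 3 / 10) (hc₃ : c₃ = Real.sqrt 91 / 10)
    (ψ : Fin 3 → ℂ) (hψ : ψ = ![(c₁ : ℂ), 0, (c₃ : ℂ)])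
    (ρψ : Matrix (Fin 3) (Fin 3) ℂ)
    (hρψ : ρψ = Matrix.of fun i j => ψ i * starRingEnd ℂ (ψ j)) :
    (ρψ.PosSemidef ∧ ρψ.trace = 1 ∧ 0 < l1Coherence ρψ) ∧
    (∀ ρ : Matrix (Fin 3) (Fin 3) ℂ, ρ.PosSemidef → ρ.trace = 1 →
      (∀ i j : Fin 3, i ≠ j → ρ i j = 0) →
      l1Coherence (U * ρ * Uᴴ) - l1Coherence ρ ≤ 1) ∧
    l1Coherence (U * ρψ * Uᴴ) - l1Coherence ρψ =
      (2 * Real.sqrt 2 - 2) * c₁ * c₃ + c₃ ^ 2 ∧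
    1 < (2 * Real.sqrt 2 - 2) * c₁ * c₃ + c₃ ^ 2 := by
  have s2pos : (0:ℝ) < Real.sqrt 2 := Real.sqrt_pos.2 (by norm_num)
  have s2sq : Real.sqrt 2 * Real.sqrt 2 = 2 := Real.mul_self_sqrt (by norm_num)
  have s91sq : Real.sqrt 91 * Real.sqrt 91 = 91 := Real.mul_self_sqrt (by norm_num)
  have s91pos : (0:ℝ) < Real.sqrt 91 := Real.sqrt_pos.2 (by norm_num)
  have hc1pos : 0 < c₁ := by rw [hc₁]; norm_num
  have hc3pos : 0 < c₃ := by rw [hc₃]; positivity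
  -- entries of ρψ
  have hρ02 : ρψ 0 2 = ((c₁ * c₃ : ℝ) : ℂ) := by
    rw [hρψ, hψ]; simp [Complex.conj_ofReal]
  have hρ20 : ρψ 2 0 = ((c₁ * c₃ : ℝ) : ℂ) := by
    rw [hρψ, hψ]; simp [Complex.conj_ofReal]; ring
  have hρ01 : ρψ 0 1 = 0 := by rw [hρψ, hψ]; simp
  have hρ10 : ρψ 1 0 = 0 := by rw [hρψ, hψ]; simp
  have hρ12 : ρψ 1 2 = 0 := by rw [hρψ, hψ]; simp
  have hρ21 : ρψ 2 1 = 0 := by rw [hρψ, hψ]; simp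
  have hl1ψ : l1Coherence ρψ = 2 * (c₁ * c₃) := by
    rw [l1_three, hρ01, hρ02, hρ10, hρ12, hρ20, hρ21]
    simp only [norm_zero, Complex.norm_real, Real.norm_eq_abs]
    rw [abs_of_nonneg (by positivity : (0:ℝ) ≤ c₁ * c₃)]
    ring
  -- entries of U ρψ Uᴴ
  have key : ∀ i j, (U * ρψ * Uᴴ) i j =
      (((![c₁, -(c₃ * (Real.sqrt 2)⁻¹), c₃ * (Real.sqrt 2)⁻¹] i
        * ![c₁, -(c₃ * (Real.sqrt 2)⁻¹), c₃ * (Real.sqrt 2)⁻¹] j : ℝ)) : ℂ) := by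
    intro i j
    rw [hU, hρψ, hψ]
    fin_cases i <;> fin_cases j <;>
    · conv_lhs => simp [Matrix.mul_apply, Fin.sum_univ_three, Matrix.vecHead, Matrix.vecTail,
        Complex.conj_ofReal]
      conv_rhs => simp
      try push_cast
      try ring
  have ht2 : (Real.sqrt 2)⁻¹ * (Real.sqrt 2)⁻¹ = 1/2 := by
    rw [← mul_inv, s2sq]
    norm_num
  have hl1U : l1Coherence (U * ρψ * Uᴴ) =
      4 * (c₁ * c₃ * (Real.sqrt 2)⁻¹) + c₃ ^ 2 := by
    rw [l1_three, key 0 1, key 0 2, key 1 0, key 1 2, key 2 0, key 2 1]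
    have hv2 : ![c₁, -(c₃ * (Real.sqrt 2)⁻¹), c₃ * (Real.sqrt 2)⁻¹] 2 = c₃ * (Real.sqrt 2)⁻¹ := rfl
    simp only [Complex.norm_real, Real.norm_eq_abs, hv2]
    norm_num [abs_mul, abs_inv, abs_of_nonneg hc1pos.le, abs_of_nonneg hc3pos.le,
      abs_of_nonneg s2pos.le, Matrix.cons_val]
    linear_combination 2 * c₃ ^ 2 * ht2
  have h4s : 4 * (Real.sqrt 2)⁻¹ = 2 * Real.sqrt 2 := by
    field_simp
    linarith [s2sq]
  refine ⟨⟨?_, ?_, ?_⟩, ?_, ?_, ?_⟩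
  · -- PosSemidef
    have : ρψ = (Matrix.of fun i (_ : Fin 1) => ψ i) *
        (Matrix.of fun i (_ : Fin 1) => ψ i)ᴴ := by
      ext i j
      simp [hρψ, Matrix.mul_apply, Matrix.conjTranspose_apply]
    rw [this]
    exact Matrix.posSemidef_self_mul_conjTranspose _
  · -- trace
    have : ρψ.trace = ((c₁ ^ 2 + c₃ ^ 2 : ℝ) : ℂ) := by
      rw [hρψ, hψ]
      simp [Matrix.trace, Fin.sum_univ_three, Complex.conj_ofReal, Matrix.diag]
      push_cast
      ring
    rw [this]
    have : c₁ ^ 2 + c₃ ^ 2 = 1 := by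
      rw [hc₁, hc₃]
      nlinarith [s91sq]
    rw [this]
    norm_num
  · rw [hl1ψ]; positivity
  · -- part (a)
    intro ρ hpsd htr hdg
    have d01 := hdg 0 1 (by decide)
    have d02 := hdg 0 2 (by decide)
    have d10 := hdg 1 0 (by decide)
    have d12 := hdg 1 2 (by decide)
    have d20 := hdg 2 0 (by decide)
    have d21 := hdg 2 1 (by decide)
    have hdiag : ∀ i, ρ i i = (((ρ i i).re : ℝ) : ℂ) ∧ 0 ≤ (ρ i i).re := by
      intro i
      have h0 : 0 ≤ ρ i i := by
        exact hpsd.diag_nonneg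
      rw [Complex.nonneg_iff] at h0
      exact ⟨by simp [Complex.ext_iff, h0.2], h0.1⟩
    set a := (ρ 0 0).re
    set b := (ρ 1 1).re
    set c := (ρ 2 2).re
    have htr' : a + b + c = 1 := by
      have h := htr
      rw [Matrix.trace, Fin.sum_univ_three] at h
      simp only [Matrix.diag_apply] at h
      rw [(hdiag 0).1, (hdiag 1).1, (hdiag 2).1] at h
      exact_mod_cast h
    have hl1ρ : l1Coherence ρ = 0 := by
      rw [l1_three, d01, d02, d10, d12, d20, d21]
      simp
    -- entries of U ρ Uᴴ
    have e01 : (U * ρ * Uᴴ) 0 1 = 0 := by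
      rw [hU]
      simp [Matrix.mul_apply, Matrix.vecMul, dotProduct, Fin.sum_univ_three, Matrix.vecHead, Matrix.vecTail,
        d01, d02, d10, d12, d20, d21]
    have e02 : (U * ρ * Uᴴ) 0 2 = 0 := by
      rw [hU]
      simp [Matrix.mul_apply, Matrix.vecMul, dotProduct, Fin.sum_univ_three, Matrix.vecHead, Matrix.vecTail,
        d01, d02, d10, d12, d20, d21]
    have e10 : (U * ρ * Uᴴ) 1 0 = 0 := by
      rw [hU]
      simp [Matrix.mul_apply, Matrix.vecMul, dotProduct, Fin.sum_univ_three, Matrix.vecHead, Matrix.vecTail,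
        d01, d02, d10, d12, d20, d21]
    have e20 : (U * ρ * Uᴴ) 2 0 = 0 := by
      rw [hU]
      simp [Matrix.mul_apply, Matrix.vecMul, dotProduct, Fin.sum_univ_three, Matrix.vecHead, Matrix.vecTail,
        d01, d02, d10, d12, d20, d21]
    have hsC : ((Real.sqrt 2 : ℝ) : ℂ)⁻¹ * ((Real.sqrt 2 : ℝ) : ℂ)⁻¹ = 1/2 := by
      rw [← mul_inv, ← Complex.ofReal_mul, s2sq]
      norm_num
    have e12 : (U * ρ * Uᴴ) 1 2 = (((b - c)/2 : ℝ) : ℂ) := by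
      rw [hU]
      conv_lhs => simp [Matrix.mul_apply, Matrix.vecMul, dotProduct, Fin.sum_univ_three, Matrix.vecHead, Matrix.vecTail,
        d01, d02, d10, d12, d20, d21, Complex.conj_ofReal]
      rw [(hdiag 1).1, (hdiag 2).1]
      push_cast
      linear_combination ((b : ℂ) - c) * hsC
    have e21 : (U * ρ * Uᴴ) 2 1 = (((b - c)/2 : ℝ) : ℂ) := by
      rw [hU]
      conv_lhs => simp [Matrix.mul_apply, Matrix.vecMul, dotProduct, Fin.sum_univ_three, Matrix.vecHead, Matrix.vecTail,
        d01, d02, d10, d12, d20, d21, Complex.conj_ofReal]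
      rw [(hdiag 1).1, (hdiag 2).1]
      push_cast
      linear_combination ((b : ℂ) - c) * hsC
    rw [l1_three, e01, e02, e10, e12, e20, e21, hl1ρ]
    simp only [norm_zero, Complex.norm_real, Real.norm_eq_abs]
    have habs : |(b - c)/2| ≤ 1/2 := by
      rw [abs_le]
      constructor <;> [linarith [(hdiag 0).2, (hdiag 1).2, (hdiag 2).2];
        linarith [(hdiag 0).2, (hdiag 1).2, (hdiag 2).2]]
    linarith
  · -- gain equality
    rw [hl1U, hl1ψ]
    linear_combination (c₁ * c₃) * h4s
  · -- strict inequality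
    have h2 : (1.4:ℝ) < Real.sqrt 2 := by nlinarith
    have h91 : (9:ℝ) < Real.sqrt 91 := by nlinarith
    have key3 : (3:ℝ) < (2 * Real.sqrt 2 - 2) * Real.sqrt 91 := by
      have ha : (0.8:ℝ) ≤ 2 * Real.sqrt 2 - 2 := by linarith
      have hb := mul_le_mul ha (le_of_lt h91) (by norm_num) (by linarith)
      nlinarith [hb]
    rw [hc₁, hc₃]
    nlinarith [key3, s91sq]
end

section
/- Let U be the 3×3 real unitary matrix R_x(π/8) with rows (1,0,0), (0, cos(π/8), −sin(π/8)), (0, sin(π/8), cos(π/8)). Let q₃ = 12533/100000, q₂ = √(1 − q₃²), let φ = q₂e₂ + q₃e₃ ∈ ℝ³ be the coherent pure input state, and let v = Uφ be its image. Then the relative-entropy coherence gain of U on φ, which for pure states equals the Shannon entropy of the output diagonal minus the Shannon entropy of the input diagonal, strictly exceeds the largest gain achievable on a pure incoherent state: −∑_j v_j² ln(v_j²) − ( −q₂² ln(q₂²) − q₃² ln(q₃²) ) > max_{i∈{1,2,3}} ( −∑_j U_{ji}² ln(U_{ji}²) ), with the convention 0·ln 0 = 0. Hence the coherence power of U with respect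 to the relative entropy of coherence is not attained on incoherent states. -/
open Matrix

private lemma sqrt_lb {x a : ℝ} (ha : 0 ≤ a) (h1 : a ^ 2 ≤ x) : a ≤ Real.sqrt x := by
  rw [← Real.sqrt_sq ha]; exact Real.sqrt_le_sqrt h1

private lemma sqrt_ub {x b : ℝ} (hb : 0 ≤ b) (h2 : x ≤ b ^ 2) : Real.sqrt x ≤ b := by
  rw [← Real.sqrt_sq hb]; exact Real.sqrt_le_sqrt h2

private lemma log_ub {x y : ℝ} (k : ℕ) (hx : 0 < x) (hy : 0 < y) (h : x ≤ y ^ k) :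
    Real.log x ≤ k * (y - 1) := by
  calc Real.log x ≤ Real.log (y ^ k) := Real.log_le_log hx h
    _ = k * Real.log y := Real.log_pow y k
    _ ≤ k * (y - 1) :=
        mul_le_mul_of_nonneg_left (Real.log_le_sub_one_of_pos hy) (Nat.cast_nonneg k)

private lemma log_lb {x y : ℝ} (k : ℕ) (hy : 0 < y) (h : y ^ k ≤ x) :
    (k : ℝ) * (1 - 1 / y) ≤ Real.log x := by
  have h1 : 1 - 1 / y ≤ Real.log y := by
    have h2 := Real.log_le_sub_one_of_pos (inv_pos.mpr hy)
    rw [Real.log_inv] at h2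
    rw [one_div]; linarith
  calc (k : ℝ) * (1 - 1 / y) ≤ k * Real.log y :=
        mul_le_mul_of_nonneg_left h1 (Nat.cast_nonneg k)
    _ = Real.log (y ^ k) := (Real.log_pow y k).symm
    _ ≤ Real.log x := Real.log_le_log (pow_pos hy k) h

set_option maxHeartbeats 1000000 in
/-- For the rotation `R_x(π/8)`, the relative-entropy coherence gain on the
coherent pure state `φ = q₂ e₂ + q₃ e₃` (with `q₃ = 12533/100000`,
`q₂ = √(1 − q₃²)`), namely the Shannon entropy of the output diagonal minus
that of the input diagonal, strictly exceeds the largest gain achievable on a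
pure incoherent state, i.e. the largest Shannon entropy of a column of squared
entries of `U`. (`Real.log 0 = 0` encodes the convention `0·ln 0 = 0`.)
Hence the coherence power of `R_x(π/8)` with respect to the relative entropy of
coherence is not attained on incoherent states. -/
theorem rotation_pi_div_eight_rel_ent_coherent_gain
    (U : Matrix (Fin 3) (Fin 3) ℝ)
    (hU : U = !![1, 0, 0;
                 0, Real.cos (Real.pi / 8), -Real.sin (Real.pi / 8);
                 0, Real.sin (Real.pi / 8), Real.cos (Real.pi / 8)])
    (q₂ q₃ : ℝ) (hq₃ : q₃ = 12533 / 100000) (hq₂ : q₂ = Real.sqrt (1 - q₃ ^ 2))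
    (φ : Fin 3 → ℝ) (hφ : φ = ![0, q₂, q₃])
    (v : Fin 3 → ℝ) (hv : v = U.mulVec φ)
    (H : Fin 3 → ℝ)
    (hH : ∀ i : Fin 3, H i = -∑ j, (U j i) ^ 2 * Real.log ((U j i) ^ 2)) :
    (-∑ j, (v j) ^ 2 * Real.log ((v j) ^ 2)) -
        (-(q₂ ^ 2 * Real.log (q₂ ^ 2)) - q₃ ^ 2 * Real.log (q₃ ^ 2)) >
      max (H 0) (max (H 1) (H 2)) := by
  set c := Real.cos (Real.pi / 8) with hcdef
  set s := Real.sin (Real.pi / 8) with hsdef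
  have hc : c = Real.sqrt (2 + Real.sqrt 2) / 2 := Real.cos_pi_div_eight
  have hs : s = Real.sqrt (2 - Real.sqrt 2) / 2 := Real.sin_pi_div_eight
  -- sqrt 2 bounds
  have hs2l : (14142135 / 10^7 : ℝ) ≤ Real.sqrt 2 := sqrt_lb (by norm_num) (by norm_num)
  have hs2u : Real.sqrt 2 ≤ 14142136 / 10^7 := sqrt_ub (by norm_num) (by norm_num)
  -- c, s bounds
  have hcl : (9238795 / 10^7 : ℝ) ≤ c := by
    rw [hc]
    have : (2 * (9238795 / 10^7) : ℝ) ≤ Real.sqrt (2 + Real.sqrt 2) :=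
      sqrt_lb (by norm_num) (by nlinarith)
    linarith
  have hcu : c ≤ 9238796 / 10^7 := by
    rw [hc]
    have : Real.sqrt (2 + Real.sqrt 2) ≤ 2 * (9238796 / 10^7) :=
      sqrt_ub (by norm_num) (by nlinarith)
    linarith
  have hsl : (3826834 / 10^7 : ℝ) ≤ s := by
    rw [hs]
    have : (2 * (3826834 / 10^7) : ℝ) ≤ Real.sqrt (2 - Real.sqrt 2) :=
      sqrt_lb (by norm_num) (by nlinarith)
    linarith
  have hsu : s ≤ 3826835 / 10^7 := by
    rw [hs]
    have : Real.sqrt (2 - Real.sqrt 2) ≤ 2 * (3826835 / 10^7) :=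
      sqrt_ub (by norm_num) (by nlinarith)
    linarith
  -- q₂ bounds and exact square
  have hq2sq : q₂ ^ 2 = 9842923911 / 10^10 := by
    rw [hq₂, Real.sq_sqrt (by rw [hq₃]; norm_num), hq₃]; norm_num
  have hq3sq : q₃ ^ 2 = 157076089 / 10^10 := by rw [hq₃]; norm_num
  have hq2l : (9921151 / 10^7 : ℝ) ≤ q₂ := by
    rw [hq₂, hq₃]; exact sqrt_lb (by norm_num) (by norm_num)
  have hq2u : q₂ ≤ 9921152 / 10^7 := by
    rw [hq₂, hq₃]; exact sqrt_ub (by norm_num) (by norm_num)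
  -- c², s² exact values
  have hc2 : c ^ 2 = (2 + Real.sqrt 2) / 4 := by
    rw [hc, div_pow, Real.sq_sqrt (by positivity)]; ring
  have hs2 : s ^ 2 = (2 - Real.sqrt 2) / 4 := by
    rw [hs, div_pow, Real.sq_sqrt (by linarith)]; ring
  -- v components
  have hv0 : v 0 = 0 := by
    rw [hv, hU, hφ]; simp [Matrix.mulVec, dotProduct, Fin.sum_univ_three]
  have hv1 : v 1 = c * q₂ + -s * q₃ := by
    rw [hv, hU, hφ]; simp [Matrix.mulVec, dotProduct, Fin.sum_univ_three]
  have hv2 : v 2 = s * q₂ + c * q₃ := by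
    rw [hv, hU, hφ]; simp [Matrix.mulVec, dotProduct, Fin.sum_univ_three]
  -- product bounds
  have hcq2l : (9238795 / 10^7 : ℝ) * (9921151 / 10^7) ≤ c * q₂ :=
    mul_le_mul hcl hq2l (by norm_num) (le_trans (by norm_num) hcl)
  have hcq2u : c * q₂ ≤ (9238796 / 10^7 : ℝ) * (9921152 / 10^7) :=
    mul_le_mul hcu hq2u (le_trans (by norm_num) hq2l) (by norm_num)
  have hsq2l : (3826834 / 10^7 : ℝ) * (9921151 / 10^7) ≤ s * q₂ :=
    mul_le_mul hsl hq2l (by norm_num) (le_trans (by norm_num) hsl)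
  have hsq2u : s * q₂ ≤ (3826835 / 10^7 : ℝ) * (9921152 / 10^7) :=
    mul_le_mul hsu hq2u (le_trans (by norm_num) hq2l) (by norm_num)
  -- v bounds
  have hv1l : (86863307 / 10^8 : ℝ) ≤ v 1 := by
    rw [hv1, hq₃]; linarith only [hcq2l, hsu]
  have hv1u : v 1 ≤ 86863329 / 10^8 := by
    rw [hv1, hq₃]; linarith only [hcq2u, hsl]
  have hv2l : (49545579 / 10^8 : ℝ) ≤ v 2 := by
    rw [hv2, hq₃]; linarith only [hsq2l, hcl]
  have hv2u : v 2 ≤ 49545595 / 10^8 := by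
    rw [hv2, hq₃]; linarith only [hsq2u, hcu]
  have hv1nn : (0:ℝ) ≤ v 1 := le_trans (by norm_num) hv1l
  have hv2nn : (0:ℝ) ≤ v 2 := le_trans (by norm_num) hv2l
  -- squared bounds
  have hv1sql : (754523 / 10^6 : ℝ) ≤ (v 1) ^ 2 :=
    le_trans (by norm_num) (pow_le_pow_left₀ (by norm_num) hv1l 2)
  have hv1squ : (v 1) ^ 2 ≤ 7545238 / 10^7 :=
    le_trans (pow_le_pow_left₀ hv1nn hv1u 2) (by norm_num)
  have hv2sql : (2454764 / 10^7 : ℝ) ≤ (v 2) ^ 2 :=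
    le_trans (by norm_num) (pow_le_pow_left₀ (by norm_num) hv2l 2)
  have hv2squ : (v 2) ^ 2 ≤ 2454767 / 10^7 :=
    le_trans (pow_le_pow_left₀ hv2nn hv2u 2) (by norm_num)
  have hv1sqpos : (0:ℝ) < (v 1) ^ 2 := lt_of_lt_of_le (by norm_num) hv1sql
  have hv2sqpos : (0:ℝ) < (v 2) ^ 2 := lt_of_lt_of_le (by norm_num) hv2sql
  -- log upper bounds for output terms
  have hL1 : Real.log ((v 1) ^ 2) ≤ 64 * ((49780431 / 50000000 : ℝ) - 1) :=
    log_ub 64 hv1sqpos (by norm_num)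
      (le_trans hv1squ (by norm_num))
  have hL2 : Real.log ((v 2) ^ 2) ≤ 64 * ((97829293 / 100000000 : ℝ) - 1) :=
    log_ub 64 hv2sqpos (by norm_num)
      (le_trans hv2squ (by norm_num))
  -- log lower bounds
  have hL3 : (64 : ℝ) * (1 - 1 / (99975263 / 100000000)) ≤
      Real.log ((9842923911 : ℝ) / 10 ^ 10) := by
    have := log_lb (x := (9842923911 : ℝ) / 10 ^ 10) (y := 99975263 / 100000000) 64
      (by norm_num) (by norm_num)
    simpa using this
  have hL4 : (64 : ℝ) * (1 - 1 / (93716101 / 100000000)) ≤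
      Real.log ((157076089 : ℝ) / 10 ^ 10) := by
    have := log_lb (x := (157076089 : ℝ) / 10 ^ 10) (y := 93716101 / 100000000) 64
      (by norm_num) (by norm_num)
    simpa using this
  have hL5 : (64 : ℝ) * (1 - 1 / (49876443 / 50000000)) ≤ Real.log (c ^ 2) := by
    have hyk : ((49876443 / 50000000 : ℝ)) ^ 64 ≤ (2 + 14142135 / 10^7) / 4 := by norm_num
    have := log_lb (x := c ^ 2) (y := 49876443 / 50000000) 64 (by norm_num)
      (by rw [hc2]; linarith only [hyk, hs2l])
    simpa using this
  have hL6 : (64 : ℝ) * (1 - 1 / (24260723 / 25000000)) ≤ Real.log (s ^ 2) := by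
    have hyk : ((24260723 / 25000000 : ℝ)) ^ 64 ≤ (2 - 14142136 / 10^7) / 4 := by norm_num
    have := log_lb (x := s ^ 2) (y := 24260723 / 25000000) 64 (by norm_num)
      (by rw [hs2]; linarith only [hyk, hs2u])
    simpa using this
  -- nonpositivity of logs
  have hc2pos : (0:ℝ) < c ^ 2 := by positivity
  have hs2pos : (0:ℝ) < s ^ 2 := by
    have : (0:ℝ) < s := lt_of_lt_of_le (by norm_num) hsl
    positivity
  have hLc0 : Real.log (c ^ 2) ≤ 0 := Real.log_nonpos (le_of_lt hc2pos)
    (by rw [hc2]; linarith only [hs2u])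
  have hLs0 : Real.log (s ^ 2) ≤ 0 := Real.log_nonpos (le_of_lt hs2pos)
    (by rw [hs2]; linarith only [hs2l])
  -- product bounds for output terms
  have B1 : (v 1) ^ 2 * Real.log ((v 1) ^ 2) ≤
      (754523 / 10^6 : ℝ) * (64 * ((49780431 / 50000000 : ℝ) - 1)) := by
    have h := mul_le_mul_of_nonneg_left hL1 (le_of_lt hv1sqpos)
    linarith only [h, hv1sql]
  have B2 : (v 2) ^ 2 * Real.log ((v 2) ^ 2) ≤
      (2454764 / 10^7 : ℝ) * (64 * ((97829293 / 100000000 : ℝ) - 1)) := by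
    have h := mul_le_mul_of_nonneg_left hL2 (le_of_lt hv2sqpos)
    linarith only [h, hv2sql]
  -- upper bounds on c², s²
  have hc2u : c ^ 2 ≤ 8535534 / 10^7 := by rw [hc2]; linarith only [hs2u]
  have hs2u' : s ^ 2 ≤ 146446625 / 10^9 := by rw [hs2]; linarith only [hs2l]
  -- bound the column entropy
  have hHb : -(c ^ 2 * Real.log (c ^ 2) + s ^ 2 * Real.log (s ^ 2)) ≤ 4210 / 10^4 := by
    have h1 := mul_nonneg (sub_nonneg.mpr hc2u) (neg_nonneg.mpr hLc0)
    have h2 := mul_nonneg (sub_nonneg.mpr hs2u') (neg_nonneg.mpr hLs0)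
    linarith only [h1, h2, hL5, hL6]
  -- H values
  have hH0 : H 0 = 0 := by
    rw [hH 0, hU, Fin.sum_univ_three]
    norm_num [Matrix.vecHead, Matrix.vecTail]
    left; rfl
  have hH1 : H 1 = -(c ^ 2 * Real.log (c ^ 2) + s ^ 2 * Real.log (s ^ 2)) := by
    rw [hH 1, hU]; simp [Fin.sum_univ_three]
  have hH2 : H 2 = -(c ^ 2 * Real.log (c ^ 2) + s ^ 2 * Real.log (s ^ 2)) := by
    rw [hH 2, hU]; simp [Fin.sum_univ_three]; ring
  -- finish
  rw [hH0, hH1, hH2, max_self, Fin.sum_univ_three, hv0, hq2sq, hq3sq]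
  have e0 : ((0:ℝ)) ^ 2 * Real.log ((0:ℝ) ^ 2) = 0 := by simp
  rw [e0]
  have hmax : max (0:ℝ) (-(c ^ 2 * Real.log (c ^ 2) + s ^ 2 * Real.log (s ^ 2))) ≤
      4210 / 10^4 := max_le (by norm_num) hHb
  refine lt_of_le_of_lt hmax ?_
  linarith only [B1, B2, hL3, hL4]
end
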